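/- Let δ ∈ (0,1) and let {l_n}_{n≥1} be a sequence of positive reals with l_n ≤ 1 for all n and ∑_{n=1}^∞ l_n^{1/4^{n/δ}} < ∞. Then there exists a constant κ > 0 such that for every ξ ∈ ℝ, ∑_{n=1}^∞ 2^{n-1} |sin(π l_n ξ)| ≤ κ·(1 + (log(1+|ξ|))^{δ/2}). -/

import Mathlib

open Real Filter Finset
open scoped NNReal

-- subadditivity of rpow for exponent in [0,1]
lemma my_rpow_subadd {x y p : ℝ} (hx : 0 ≤ x) (hy : 0 ≤ y) (hp : 0 ≤ p) (hp1 : p ≤ 1) :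
    (x + y) ^ p ≤ x ^ p + y ^ p := by
  have := NNReal.rpow_add_le_add_rpow (x.toNNReal) (y.toNNReal) hp hp1
  have hxy : (x.toNNReal + y.toNNReal : ℝ≥0) = (x + y).toNNReal := by
    rw [← Real.toNNReal_add hx hy]
  rw [hxy] at this
  have h1 : ((x + y).toNNReal ^ p : ℝ≥0) = ((x + y) ^ p).toNNReal := by
    rw [← Real.toNNReal_rpow_of_nonneg (by positivity)]
  have h2 : ((x.toNNReal) ^ p : ℝ≥0) = (x ^ p).toNNReal := by
    rw [← Real.toNNReal_rpow_of_nonneg hx]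
  have h3 : ((y.toNNReal) ^ p : ℝ≥0) = (y ^ p).toNNReal := by
    rw [← Real.toNNReal_rpow_of_nonneg hy]
  rw [h1, h2, h3] at this
  have := NNReal.coe_le_coe.mpr this
  rwa [NNReal.coe_add, Real.coe_toNNReal _ (by positivity),
    Real.coe_toNNReal _ (by positivity), Real.coe_toNNReal _ (by positivity)] at this


set_option maxHeartbeats 1000000 in
/-- If `δ ∈ (0,1)` and `{l_n}_{n≥1} ⊂ (0,1]` satisfies
`∑_{n≥1} l_n^(1/4^(n/δ)) < ∞`, then there is `κ > 0` such that for every `ξ ∈ ℝ`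
the sum `∑_{n≥1} 2^{n-1} |sin(π l_n ξ)|` converges and is at most
`κ (1 + log^{δ/2}(1+|ξ|))`. (Here `l n` stands for the paper's `l_{n+1}`,
so `2^n * ⋯ l n ⋯` is the paper's `2^{n-1}|sin(π l_n ξ)|`.) -/
theorem stmt9 (δ : ℝ) (hδ : δ ∈ Set.Ioo (0 : ℝ) 1) (l : ℕ → ℝ)
    (hl : ∀ n, 0 < l n) (hl1 : ∀ n, l n ≤ 1)
    (hsum : Summable fun n : ℕ => l n ^ ((4 : ℝ) ^ (-((n : ℝ) + 1) / δ))) :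
    ∃ κ > (0 : ℝ), ∀ ξ : ℝ,
      (Summable fun n : ℕ => (2 : ℝ) ^ n * |Real.sin (Real.pi * l n * ξ)|) ∧
      ∑' n : ℕ, (2 : ℝ) ^ n * |Real.sin (Real.pi * l n * ξ)| ≤
        κ * (1 + Real.log (1 + |ξ|) ^ (δ / 2)) := by
  obtain ⟨hδ0, hδ1⟩ := hδ
  -- Step 1: find n₀ past which the summand is ≤ 1/2
  have htend : Tendsto (fun n : ℕ => l n ^ ((4 : ℝ) ^ (-((n : ℝ) + 1) / δ))) atTop (nhds 0) :=
    hsum.tendsto_atTop_zero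
  have hev : ∀ᶠ n in atTop, l n ^ ((4 : ℝ) ^ (-((n : ℝ) + 1) / δ)) < 1 / 2 :=
    htend.eventually (gt_mem_nhds (by norm_num))
  obtain ⟨n₀, hn₀⟩ := eventually_atTop.mp hev
  -- Step 2: l n ≤ 2 ^ (-4^((n+1)/δ)) for n ≥ n₀
  have hkey : ∀ n, n₀ ≤ n → l n ≤ (2 : ℝ) ^ (-((4 : ℝ) ^ (((n : ℝ) + 1) / δ))) := by
    intro n hn
    set c : ℝ := (4 : ℝ) ^ (-((n : ℝ) + 1) / δ) with hc
    have hcpos : 0 < c := Real.rpow_pos_of_pos (by norm_num) _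
    have h1 : l n ^ c ≤ 1 / 2 := (hn₀ n hn).le
    have h2 : (l n ^ c) ^ c⁻¹ ≤ ((1 : ℝ) / 2) ^ c⁻¹ :=
      Real.rpow_le_rpow (Real.rpow_nonneg (hl n).le _) h1 (inv_nonneg.mpr hcpos.le)
    rw [← Real.rpow_mul (hl n).le, mul_inv_cancel₀ hcpos.ne', Real.rpow_one] at h2
    have hcinv : c⁻¹ = (4 : ℝ) ^ (((n : ℝ) + 1) / δ) := by
      rw [hc, neg_div, Real.rpow_neg (by norm_num : (0:ℝ) ≤ 4), inv_inv]
    calc l n ≤ ((1 : ℝ) / 2) ^ c⁻¹ := h2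
      _ = (2 : ℝ) ^ (-((4 : ℝ) ^ (((n : ℝ) + 1) / δ))) := by
          rw [one_div, Real.inv_rpow (by norm_num : (0:ℝ) ≤ 2),
            ← Real.rpow_neg (by norm_num : (0:ℝ) ≤ 2), hcinv]
  refine ⟨2 ^ (n₀ + 4) + 2, by have h := pow_pos (show (0:ℝ) < 2 by norm_num) (n₀ + 4); linarith,
    fun ξ => ?_⟩
  set L := Real.log (1 + |ξ|) with hLdef
  have hL0 : 0 ≤ L := Real.log_nonneg (by linarith [abs_nonneg ξ])
  set M := max 1 (Real.pi * |ξ|) with hMdef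
  have hM1 : (1 : ℝ) ≤ M := le_max_left _ _
  set t := Real.logb 2 M with htdef
  have ht0 : 0 ≤ t := Real.logb_nonneg one_lt_two hM1
  have hMt : M = (2 : ℝ) ^ t :=
    (Real.rpow_logb two_pos (by norm_num) (lt_of_lt_of_le one_pos hM1)).symm
  set T := max 1 t with hTdef
  have hT1 : (1 : ℝ) ≤ T := le_max_left _ _
  have hTpos : (0 : ℝ) < T := lt_of_lt_of_le one_pos hT1
  have hlogb4T : 0 ≤ Real.logb 4 T := Real.logb_nonneg (by norm_num) hT1
  obtain ⟨m, hmlo, hmhi⟩ : ∃ m : ℕ, δ * Real.logb 4 T ≤ (m : ℝ) ∧ (m : ℝ) ≤ δ * Real.logb 4 T + 1 :=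
    ⟨⌈δ * Real.logb 4 T⌉₊, Nat.le_ceil _, (Nat.ceil_lt_add_one (by positivity)).le⟩
  -- tail bound
  have htail : ∀ k, n₀ + m + 1 ≤ k → (2 : ℝ) ^ k * |Real.sin (Real.pi * l k * ξ)| ≤ (1 / 2 : ℝ) ^ k := by
    intro k hk
    have hk0 : n₀ ≤ k := by omega
    have hkm : (m : ℝ) ≤ (k : ℝ) := by exact_mod_cast Nat.cast_le.mpr (show m ≤ k by omega)
    set A := (4 : ℝ) ^ (((k : ℝ) + 1) / δ) with hAdef
    -- A ≥ 2k + t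
    have h4k : (k : ℝ) ≤ (4 : ℝ) ^ ((k : ℝ) / δ) := by
      have h1 : (k : ℝ) ≤ (k : ℝ) / δ := by
        rw [le_div_iff₀ hδ0]
        nlinarith [Nat.cast_nonneg (α := ℝ) k]
      have h2 : (2 : ℝ) ^ ((k : ℝ)) ≤ (4 : ℝ) ^ ((k : ℝ) / δ) := by
        calc (2 : ℝ) ^ ((k : ℝ)) ≤ (4 : ℝ) ^ ((k : ℝ)) :=
              Real.rpow_le_rpow (by norm_num) (by norm_num) (Nat.cast_nonneg k)
          _ ≤ (4 : ℝ) ^ ((k : ℝ) / δ) :=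
              Real.rpow_le_rpow_of_exponent_le (by norm_num) h1
      refine le_trans ?_ h2
      rw [Real.rpow_natCast]
      exact_mod_cast (Nat.lt_two_pow_self (n := k)).le
    have h4t : t ≤ (4 : ℝ) ^ ((k : ℝ) / δ) := by
      have h1 : δ * Real.logb 4 T ≤ (k : ℝ) := le_trans hmlo hkm
      have h2 : Real.logb 4 T ≤ (k : ℝ) / δ := by
        rw [le_div_iff₀ hδ0]; nlinarith
      calc t ≤ T := le_max_right _ _
        _ = (4 : ℝ) ^ (Real.logb 4 T) :=
            (Real.rpow_logb (by norm_num) (by norm_num) hTpos).symm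
        _ ≤ (4 : ℝ) ^ ((k : ℝ) / δ) :=
            Real.rpow_le_rpow_of_exponent_le (by norm_num) h2
    have hA2k : 2 * (k : ℝ) + t ≤ A := by
      have hsplit : A = (4 : ℝ) ^ ((k : ℝ) / δ) * (4 : ℝ) ^ ((1 : ℝ) / δ) := by
        rw [hAdef, ← Real.rpow_add (by norm_num : (0:ℝ) < 4)]
        ring_nf
      have h41 : (4 : ℝ) ≤ (4 : ℝ) ^ ((1 : ℝ) / δ) := by
        calc (4 : ℝ) = (4 : ℝ) ^ (1 : ℝ) := (Real.rpow_one 4).symm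
          _ ≤ (4 : ℝ) ^ ((1 : ℝ) / δ) := by
              refine Real.rpow_le_rpow_of_exponent_le (by norm_num) ?_
              rw [le_div_iff₀ hδ0]; linarith
      have hpos : (0 : ℝ) < (4 : ℝ) ^ ((k : ℝ) / δ) := Real.rpow_pos_of_pos (by norm_num) _
      nlinarith
    have hs : |Real.sin (Real.pi * l k * ξ)| ≤ l k * M := by
      calc |Real.sin (Real.pi * l k * ξ)| ≤ |Real.pi * l k * ξ| := Real.abs_sin_le_abs
        _ = l k * (Real.pi * |ξ|) := by
            rw [abs_mul, abs_mul, abs_of_pos Real.pi_pos, abs_of_pos (hl k)]; ring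
        _ ≤ l k * M := mul_le_mul_of_nonneg_left (le_max_right _ _) (hl k).le
    calc (2 : ℝ) ^ k * |Real.sin (Real.pi * l k * ξ)|
        ≤ (2 : ℝ) ^ k * (l k * M) := mul_le_mul_of_nonneg_left hs (by positivity)
      _ ≤ (2 : ℝ) ^ ((k : ℝ)) * ((2 : ℝ) ^ (-A) * (2 : ℝ) ^ t) := by
          rw [Real.rpow_natCast]
          refine mul_le_mul_of_nonneg_left ?_ (by positivity)
          rw [hMt]
          exact mul_le_mul (hkey k hk0) le_rfl (by positivity) (by positivity)
      _ = (2 : ℝ) ^ ((k : ℝ) + (-A + t)) := by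
          rw [← Real.rpow_add two_pos, ← Real.rpow_add two_pos]
      _ ≤ (2 : ℝ) ^ (-(k : ℝ)) :=
          Real.rpow_le_rpow_of_exponent_le one_le_two (by linarith)
      _ = (1 / 2 : ℝ) ^ k := by
          rw [Real.rpow_neg (by norm_num : (0:ℝ) ≤ 2), Real.rpow_natCast, one_div, inv_pow]
  have hgeo : Summable (fun n : ℕ => (1 / 2 : ℝ) ^ n) :=
    summable_geometric_of_lt_one (by norm_num) (by norm_num)
  have hsumm : Summable (fun n : ℕ => (2 : ℝ) ^ n * |Real.sin (Real.pi * l n * ξ)|) := by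
    rw [← summable_nat_add_iff (n₀ + m + 1)]
    refine Summable.of_nonneg_of_le (fun n => by positivity) (fun n => ?_) hgeo
    calc (2 : ℝ) ^ (n + (n₀ + m + 1)) * |Real.sin (Real.pi * l (n + (n₀ + m + 1)) * ξ)|
        ≤ (1 / 2 : ℝ) ^ (n + (n₀ + m + 1)) := htail _ (by omega)
      _ ≤ (1 / 2 : ℝ) ^ n := pow_le_pow_of_le_one (by norm_num) (by norm_num) (by omega)
  refine ⟨hsumm, ?_⟩
  have hsplit := (Summable.sum_add_tsum_nat_add (n₀ + m + 1) hsumm).symm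
  have hhead : ∑ i ∈ Finset.range (n₀ + m + 1), (2 : ℝ) ^ i * |Real.sin (Real.pi * l i * ξ)| ≤ 2 ^ (n₀ + m + 1) := by
    calc ∑ i ∈ Finset.range (n₀ + m + 1), (2 : ℝ) ^ i * |Real.sin (Real.pi * l i * ξ)|
        ≤ ∑ i ∈ Finset.range (n₀ + m + 1), (2 : ℝ) ^ i := by
          refine Finset.sum_le_sum fun i _ => ?_
          have h1 : |Real.sin (Real.pi * l i * ξ)| ≤ 1 :=
            abs_le.mpr ⟨Real.neg_one_le_sin _, Real.sin_le_one _⟩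
          nlinarith [pow_pos (show (0:ℝ) < 2 by norm_num) i,
            abs_nonneg (Real.sin (Real.pi * l i * ξ))]
      _ = 2 ^ (n₀ + m + 1) - 1 := by rw [geom_sum_eq (by norm_num : (2:ℝ) ≠ 1)]; norm_num
      _ ≤ 2 ^ (n₀ + m + 1) := by linarith
  have htailsum : ∑' n : ℕ, (2 : ℝ) ^ (n + (n₀ + m + 1)) * |Real.sin (Real.pi * l (n + (n₀ + m + 1)) * ξ)| ≤ 2 := by
    have h1 : ∑' n : ℕ, ((1 : ℝ) / 2) ^ n = 2 := by
      rw [tsum_geometric_of_lt_one (by norm_num) (by norm_num)]; norm_num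
    calc ∑' n : ℕ, (2 : ℝ) ^ (n + (n₀ + m + 1)) * |Real.sin (Real.pi * l (n + (n₀ + m + 1)) * ξ)|
        ≤ ∑' n : ℕ, ((1 : ℝ) / 2) ^ n := by
          refine Summable.tsum_le_tsum (fun n => ?_) ((summable_nat_add_iff (n₀ + m + 1)).mpr hsumm) hgeo
          calc (2 : ℝ) ^ (n + (n₀ + m + 1)) * |Real.sin (Real.pi * l (n + (n₀ + m + 1)) * ξ)|
              ≤ (1 / 2 : ℝ) ^ (n + (n₀ + m + 1)) := htail _ (by omega)
            _ ≤ (1 / 2 : ℝ) ^ n := pow_le_pow_of_le_one (by norm_num) (by norm_num) (by omega)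
      _ = 2 := h1
  -- bound 2^(n₀ + m + 1)
  have hexp : (2 : ℝ) ^ (δ * Real.logb 4 T) = T ^ (δ / 2) := by
    rw [Real.rpow_def_of_pos two_pos, Real.rpow_def_of_pos hTpos, Real.logb,
      show (4 : ℝ) = 2 ^ 2 by norm_num, Real.log_pow]
    congr 1
    have h2 : Real.log 2 ≠ 0 := by
      have := Real.log_two_gt_d9; linarith
    field_simp
    ring
  have h2N : (2 : ℝ) ^ (n₀ + m + 1) ≤ 2 ^ (n₀ + 2) * T ^ (δ / 2) := by
    have hm1 : (m : ℝ) ≤ δ * Real.logb 4 T + 1 := hmhi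
    have h2m : (2 : ℝ) ^ m ≤ 2 * T ^ (δ / 2) := by
      calc (2 : ℝ) ^ m = (2 : ℝ) ^ ((m : ℝ)) := (Real.rpow_natCast 2 m).symm
        _ ≤ (2 : ℝ) ^ (δ * Real.logb 4 T + 1) :=
            Real.rpow_le_rpow_of_exponent_le one_le_two hm1
        _ = 2 * T ^ (δ / 2) := by
            rw [Real.rpow_add two_pos, hexp, Real.rpow_one]; ring
    calc (2 : ℝ) ^ (n₀ + m + 1) = 2 ^ (n₀ + 1) * 2 ^ m := by ring
      _ ≤ 2 ^ (n₀ + 1) * (2 * T ^ (δ / 2)) :=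
          mul_le_mul_of_nonneg_left h2m (by positivity)
      _ = 2 ^ (n₀ + 2) * T ^ (δ / 2) := by ring
  -- bound T^(δ/2)
  have hTd : T ^ (δ / 2) ≤ 3 * (1 + L ^ (δ / 2)) := by
    have hMle : M ≤ Real.pi * (1 + |ξ|) := by
      refine max_le ?_ ?_
      · nlinarith [Real.pi_gt_three, abs_nonneg ξ]
      · nlinarith [Real.pi_pos, abs_nonneg ξ]
    have hlogM : Real.log M ≤ 3 + L := by
      calc Real.log M ≤ Real.log (Real.pi * (1 + |ξ|)) :=
            Real.log_le_log (by positivity) hMle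
        _ = Real.log Real.pi + L := by
            rw [Real.log_mul Real.pi_pos.ne' (by positivity)]
        _ ≤ 3 + L := by
            have := Real.log_le_sub_one_of_pos Real.pi_pos
            have := Real.pi_le_four
            linarith
    have hlogM0 : 0 ≤ Real.log M := Real.log_nonneg hM1
    have ht_le : t ≤ 6 + 2 * L := by
      have hlog2 : (1 / 2 : ℝ) ≤ Real.log 2 := by
        have := Real.log_two_gt_d9; linarith
      rw [htdef, Real.logb, div_le_iff₀ (by linarith)]
      nlinarith
    have hTle : T ≤ 8 * (1 + L) := max_le (by linarith) (by linarith)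
    have h8 : (8 : ℝ) ^ (δ / 2) ≤ 3 := by
      calc (8 : ℝ) ^ (δ / 2) ≤ (8 : ℝ) ^ ((1 : ℝ) / 2) :=
            Real.rpow_le_rpow_of_exponent_le (by norm_num) (by linarith)
        _ = Real.sqrt 8 := by rw [← Real.sqrt_eq_rpow]
        _ ≤ 3 := by
            rw [show (3:ℝ) = Real.sqrt 9 by
              rw [show (9:ℝ) = 3 ^ 2 by norm_num, Real.sqrt_sq (by norm_num : (0:ℝ) ≤ 3)]]
            exact Real.sqrt_le_sqrt (by norm_num)
    have hsub : (1 + L) ^ (δ / 2) ≤ 1 + L ^ (δ / 2) := by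
      have h := my_rpow_subadd (p := δ/2) (by norm_num : (0:ℝ) ≤ 1) hL0 (by positivity) (by linarith)
      rwa [Real.one_rpow] at h
    have h1L : (0:ℝ) ≤ (1 + L) ^ (δ / 2) := by positivity
    calc T ^ (δ / 2) ≤ (8 * (1 + L)) ^ (δ / 2) :=
          Real.rpow_le_rpow hTpos.le hTle (by positivity)
      _ = 8 ^ (δ / 2) * (1 + L) ^ (δ / 2) :=
          Real.mul_rpow (by norm_num) (by positivity)
      _ ≤ 3 * (1 + L ^ (δ / 2)) := by nlinarith
  -- assemble
  have hX0 : 0 ≤ L ^ (δ / 2) := Real.rpow_nonneg hL0 _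
  have hpos2 : (0:ℝ) < 2 ^ (n₀ + 2) := by positivity
  have hpow : (2:ℝ) ^ (n₀ + 4) = 4 * 2 ^ (n₀ + 2) := by ring
  calc ∑' n : ℕ, (2 : ℝ) ^ n * |Real.sin (Real.pi * l n * ξ)|
      = (∑ i ∈ Finset.range (n₀ + m + 1), (2 : ℝ) ^ i * |Real.sin (Real.pi * l i * ξ)|)
        + ∑' n : ℕ, (2 : ℝ) ^ (n + (n₀ + m + 1)) * |Real.sin (Real.pi * l (n + (n₀ + m + 1)) * ξ)| := hsplit
    _ ≤ 2 ^ (n₀ + m + 1) + 2 := add_le_add hhead htailsum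
    _ ≤ 2 ^ (n₀ + 2) * T ^ (δ / 2) + 2 := by linarith
    _ ≤ 2 ^ (n₀ + 2) * (3 * (1 + L ^ (δ / 2))) + 2 :=
        add_le_add_left (mul_le_mul_of_nonneg_left hTd hpos2.le) 2
    _ ≤ (2 ^ (n₀ + 4) + 2) * (1 + L ^ (δ / 2)) := by nlinarith
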